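/- Every face of a zonoid is a translate of a zonoid: if K = μ(Σ) ⊆ R^n is the range of a nonatomic vector measure μ, x* is a nonzero linear functional with β = sup{x*(μ(E)) : E ∈ Σ} attained, then the face F = {x ∈ K : x*(x) = β} satisfies F = μ(S₁) + μ|_{S₀}(Σ) for measurable sets S₀, S₁ such that x*∘μ(S₁) = β and every measurable subset of S₀ is (x*∘μ)-null. -/

import Mathlib

open MeasureTheory

private lemma null_of_setIntegral_eq_zero_aux {α : Type*} [MeasurableSpace α] {m : Measure α}
    {g : α → ℝ} (hint : Integrable g m) {D : Set α} (hD : MeasurableSet D)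
    (hpos : ∀ x ∈ D, 0 < g x) (hzero : ∫ x in D, g x ∂m = 0) : m D = 0 := by
  have h0 : 0 ≤ᵐ[m.restrict D] g :=
    (ae_restrict_iff' hD).2 (Filter.Eventually.of_forall fun x hx => (hpos x hx).le)
  have h1 : g =ᵐ[m.restrict D] 0 :=
    (integral_eq_zero_iff_of_nonneg_ae h0 hint.integrableOn).1 hzero
  have h2 : ∀ᵐ x ∂m, x ∈ D → g x = 0 := (ae_restrict_iff' hD).1 h1
  have h3 : ∀ᵐ x ∂m, x ∉ D := h2.mono fun x hx hxD => (hpos x hxD).ne' (hx hxD)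
  simpa [ae_iff, not_not] using h3

theorem face_of_zonoid {S : Type*} [MeasurableSpace S] (n : ℕ)
    (μ : VectorMeasure S (Fin n → ℝ))
    (hna : ∀ E, MeasurableSet E → μ E ≠ 0 →
      ∃ F, MeasurableSet F ∧ F ⊆ E ∧ μ F ≠ 0 ∧ μ F ≠ μ E)
    (f : (Fin n → ℝ) →ₗ[ℝ] ℝ) (hf : f ≠ 0) (β : ℝ)
    (hβ : β = sSup {r | ∃ E, MeasurableSet E ∧ f (μ E) = r})
    (hattained : ∃ E, MeasurableSet E ∧ f (μ E) = β)
    (K : Set (Fin n → ℝ)) (hK : K = {x | ∃ E, MeasurableSet E ∧ μ E = x}) :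
    ∃ S₀ S₁ : Set S, MeasurableSet S₀ ∧ MeasurableSet S₁ ∧
      f (μ S₁) = β ∧
      (∀ E, E ⊆ S₀ → MeasurableSet E → f (μ E) = 0) ∧
      {x ∈ K | f x = β} =
        {y | ∃ E, MeasurableSet E ∧ y = μ S₁ + μ (E ∩ S₀)} := by
  classical
  have hfc : Continuous f := f.continuous_of_finiteDimensional
  set ν : SignedMeasure S := μ.mapRange f.toAddMonoidHom hfc with hνdef
  have hνapp : ∀ E : Set S, ν E = f (μ E) := fun E => VectorMeasure.mapRange_apply μ hfc
  set lam : Measure S := ∑ i : Fin n,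
    SignedMeasure.totalVariation (μ.mapRange
      (LinearMap.proj (R := ℝ) (φ := fun _ : Fin n => ℝ) i).toAddMonoidHom
      (continuous_apply i)) with hlamdef
  haveI hfin : ∀ (s : SignedMeasure S), IsFiniteMeasure s.totalVariation := fun s => by
    unfold SignedMeasure.totalVariation; infer_instance
  haveI : IsFiniteMeasure lam := by rw [hlamdef]; infer_instance
  -- μ vanishes on lam-null sets
  have hμnull : ∀ A : Set S, lam A = 0 → μ A = 0 := by
    intro A hA
    rw [hlamdef, Measure.finset_sum_apply] at hA
    funext i
    have hi : SignedMeasure.totalVariation (μ.mapRange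
        (LinearMap.proj (R := ℝ) (φ := fun _ : Fin n => ℝ) i).toAddMonoidHom
        (continuous_apply i)) A = 0 :=
      (Finset.sum_eq_zero_iff.1 hA) i (Finset.mem_univ i)
    have := SignedMeasure.null_of_totalVariation_zero _ hi
    change μ A i = 0 at this
    exact this
  have habs : ν ≪ᵥ lam.toENNRealVectorMeasure := by
    refine VectorMeasure.AbsolutelyContinuous.mk fun s hs h0 => ?_
    rw [Measure.toENNRealVectorMeasure_apply_measurable hs] at h0
    rw [hνapp, hμnull s h0, map_zero]
  set g : S → ℝ := ν.rnDeriv lam with hgdef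
  have hgmeas : Measurable g := SignedMeasure.measurable_rnDeriv ν lam
  have hgint : Integrable g lam := SignedMeasure.integrable_rnDeriv ν lam
  have hwd : lam.withDensityᵥ g = ν := ν.withDensityᵥ_rnDeriv_eq lam habs
  have hrep : ∀ E : Set S, MeasurableSet E → f (μ E) = ∫ x in E, g x ∂lam := by
    intro E hE
    rw [← hνapp, ← hwd, withDensityᵥ_apply hgint hE]
  set S₁ : Set S := {x | 0 < g x} with hS₁def
  set S₀ : Set S := {x | g x = 0} with hS₀def
  set Sm : Set S := {x | g x < 0} with hSmdef
  have hS₁ : MeasurableSet S₁ := measurableSet_lt measurable_const hgmeas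
  have hS₀ : MeasurableSet S₀ := hgmeas (measurableSet_singleton 0)
  have hSm : MeasurableSet Sm := measurableSet_lt hgmeas measurable_const
  set b : ℝ := ∫ x in S₁, g x ∂lam with hbdef
  have hg0S₁ : 0 ≤ᵐ[lam.restrict S₁] g :=
    (ae_restrict_iff' hS₁).2 (Filter.Eventually.of_forall fun x hx => le_of_lt hx)
  have hub : ∀ E : Set S, MeasurableSet E → ∫ x in E, g x ∂lam ≤ b := by
    intro E hE
    have hsplit : ∫ x in E ∩ S₁, g x ∂lam + ∫ x in E \ S₁, g x ∂lam = ∫ x in E, g x ∂lam :=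
      integral_inter_add_diff hS₁ hgint.integrableOn
    have h1 : ∫ x in E ∩ S₁, g x ∂lam ≤ b :=
      setIntegral_mono_set hgint.integrableOn hg0S₁
        (HasSubset.Subset.eventuallyLE Set.inter_subset_right)
    have h2 : ∫ x in E \ S₁, g x ∂lam ≤ 0 :=
      setIntegral_nonpos (hE.diff hS₁) fun x hx => le_of_not_gt hx.2
    linarith [hsplit]
  have hβb : β = b := by
    rw [hβ]
    apply le_antisymm
    · refine csSup_le ⟨f (μ S₁), S₁, hS₁, rfl⟩ ?_
      rintro r ⟨E, hE, rfl⟩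
      rw [hrep E hE]; exact hub E hE
    · refine le_csSup ⟨b, ?_⟩ ⟨S₁, hS₁, (hrep S₁ hS₁).symm ▸ rfl⟩
      rintro r ⟨E, hE, rfl⟩
      rw [hrep E hE]; exact hub E hE
  have hfS₁ : f (μ S₁) = β := by rw [hrep S₁ hS₁, hβb]
  have hS₀null : ∀ E, E ⊆ S₀ → MeasurableSet E → f (μ E) = 0 := by
    intro E hEsub hE
    rw [hrep E hE, setIntegral_congr_fun hE (fun x hx => hEsub hx), integral_zero]
  refine ⟨S₀, S₁, hS₀, hS₁, hfS₁, hS₀null, ?_⟩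
  ext x
  constructor
  · rintro ⟨hxK, hfx⟩
    rw [hK] at hxK
    obtain ⟨E, hE, rfl⟩ := hxK
    refine ⟨E, hE, ?_⟩
    -- pieces
    have hA : MeasurableSet (E ∩ S₁) := hE.inter hS₁
    have hB : MeasurableSet (E ∩ S₀) := hE.inter hS₀
    have hC : MeasurableSet (E ∩ Sm) := hE.inter hSm
    have hD : MeasurableSet (S₁ \ E) := hS₁.diff hE
    have hEunion : E = (E ∩ S₁ ∪ E ∩ S₀) ∪ E ∩ Sm := by
      ext y
      simp only [Set.mem_union, Set.mem_inter_iff, hS₁def, hS₀def, hSmdef, Set.mem_setOf_eq]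
      constructor
      · intro hy
        rcases lt_trichotomy (g y) 0 with h | h | h
        · exact Or.inr ⟨hy, h⟩
        · exact Or.inl (Or.inr ⟨hy, h⟩)
        · exact Or.inl (Or.inl ⟨hy, h⟩)
      · rintro ((⟨hy, _⟩ | ⟨hy, _⟩) | ⟨hy, _⟩) <;> exact hy
    have hdisjAB : Disjoint (E ∩ S₁) (E ∩ S₀) := by
      rw [Set.disjoint_left]
      rintro y ⟨_, hy1⟩ ⟨_, hy0⟩
      simp only [hS₁def, hS₀def, Set.mem_setOf_eq] at hy1 hy0
      exact hy1.ne' hy0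
    have hdisjABC : Disjoint (E ∩ S₁ ∪ E ∩ S₀) (E ∩ Sm) := by
      rw [Set.disjoint_left]
      rintro y (⟨_, hy1⟩ | ⟨_, hy0⟩) ⟨_, hym⟩
      · simp only [hS₁def, hSmdef, Set.mem_setOf_eq] at hy1 hym
        exact absurd (hy1.trans hym) (lt_irrefl 0)
      · simp only [hS₀def, hSmdef, Set.mem_setOf_eq] at hy0 hym
        exact absurd (hy0 ▸ hym) (lt_irrefl 0)
    -- integral of E splits
    have hintB : ∫ y in E ∩ S₀, g y ∂lam = 0 := by
      rw [setIntegral_congr_fun hB (fun y hy => hy.2), integral_zero]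
    have hintE : ∫ y in E, g y ∂lam
        = ∫ y in E ∩ S₁, g y ∂lam + ∫ y in E ∩ Sm, g y ∂lam := by
      conv_lhs => rw [hEunion]
      rw [setIntegral_union hdisjABC hC ((hgint.integrableOn).mono_set
          (by intro y hy; exact hy)) (hgint.integrableOn.mono_set (by intro y hy; exact hy)),
        setIntegral_union hdisjAB hB (hgint.integrableOn.mono_set (by intro y hy; exact hy))
          (hgint.integrableOn.mono_set (by intro y hy; exact hy)), hintB]
      ring
    have hintS₁ : b = ∫ y in E ∩ S₁, g y ∂lam + ∫ y in S₁ \ E, g y ∂lam := by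
      rw [hbdef, ← integral_inter_add_diff hE hgint.integrableOn, Set.inter_comm]
    have hEb : ∫ y in E, g y ∂lam = b := by rw [← hrep E hE, hfx, hβb]
    -- conclude the two error terms vanish
    have hCle : ∫ y in E ∩ Sm, g y ∂lam ≤ 0 :=
      setIntegral_nonpos hC fun y hy => le_of_lt hy.2
    have hDge : 0 ≤ ∫ y in S₁ \ E, g y ∂lam :=
      setIntegral_nonneg hD fun y hy => le_of_lt hy.1
    have hCzero : ∫ y in E ∩ Sm, g y ∂lam = 0 := by linarith
    have hDzero : ∫ y in S₁ \ E, g y ∂lam = 0 := by linarith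
    have hlamD : lam (S₁ \ E) = 0 :=
      null_of_setIntegral_eq_zero_aux hgint hD (fun y hy => hy.1) hDzero
    have hlamC : lam (E ∩ Sm) = 0 := by
      refine null_of_setIntegral_eq_zero_aux (g := fun y => -g y) hgint.neg hC
        (fun y hy => neg_pos.2 hy.2) ?_
      rw [integral_neg, hCzero, neg_zero]
    have hμD : μ (S₁ \ E) = 0 := hμnull _ hlamD
    have hμC : μ (E ∩ Sm) = 0 := hμnull _ hlamC
    -- μ E = μ (E∩S₁) + μ (E∩S₀)
    have hμE : μ E = μ (E ∩ S₁) + μ (E ∩ S₀) := by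
      conv_lhs => rw [hEunion]
      rw [VectorMeasure.of_union hdisjABC (hA.union hB) hC, hμC, add_zero,
        VectorMeasure.of_union hdisjAB hA hB]
    -- μ S₁ = μ (E∩S₁)
    have hμS₁ : μ S₁ = μ (E ∩ S₁) := by
      have : S₁ = (S₁ ∩ E) ∪ (S₁ \ E) := (Set.inter_union_diff S₁ E).symm
      conv_lhs => rw [this]
      rw [VectorMeasure.of_union (Set.disjoint_sdiff_right.mono_left Set.inter_subset_right)
        (hS₁.inter hE) hD, hμD, add_zero, Set.inter_comm]
    rw [hμE, hμS₁]
  · rintro ⟨E, hE, rfl⟩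
    have hB : MeasurableSet (E ∩ S₀) := hE.inter hS₀
    have hdisj : Disjoint S₁ (E ∩ S₀) := by
      rw [Set.disjoint_left]
      rintro y hy1 ⟨_, hy0⟩
      simp only [hS₁def, hS₀def, Set.mem_setOf_eq] at hy1 hy0
      exact hy1.ne' hy0
    constructor
    · rw [hK]
      exact ⟨S₁ ∪ E ∩ S₀, hS₁.union hB, by rw [VectorMeasure.of_union hdisj hS₁ hB]⟩
    · rw [map_add, hfS₁, hS₀null (E ∩ S₀) Set.inter_subset_right hB, add_zero]
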